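/- For all natural n, the generalized fibonomial at argument −1/2 satisfies {−1/2 choose n}_{s,t} = (−1)ⁿ/4ⁿ · {2n choose n}_{s,t} · L_n(s,t), where L_n(s,t) = (−t)^{−n²/2}·4ⁿ / (⟨n⟩_{s,t}! · ∏_{j=0}^{n−1}(φ^{j+1/2} + φ'^{j+1/2})). -/

import Mathlib

noncomputable section
open Real

/-- Generalized Fibonacci function {α} = (φ^α − φ'^α)/(φ−φ'), real powers. -/
def genFibFun (φ φ' α : ℝ) : ℝ := (φ ^ α - φ' ^ α) / (φ - φ')

/-- Generalized Lucas function ⟨α⟩ = φ^α + φ'^α. -/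
def genLucasFun (φ φ' α : ℝ) : ℝ := φ ^ α + φ' ^ α

def fibtorial (φ φ' : ℝ) (n : ℕ) : ℝ := ∏ j ∈ Finset.range n, genFibFun φ φ' ((j : ℝ) + 1)

def lucastorial (φ φ' : ℝ) (n : ℕ) : ℝ := ∏ j ∈ Finset.range n, genLucasFun φ φ' ((j : ℝ) + 1)

/-- L_m(s,t) = (−t)^{−m²/2}·4^m / (⟨m⟩! · ∏_{j=0}^{m−1} (φ^{j+1/2} + φ'^{j+1/2})). -/
def Lfun (t φ φ' : ℝ) (m : ℕ) : ℝ :=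
  (-t) ^ (-(m ^ 2 : ℝ) / 2) * 4 ^ m /
    (lucastorial φ φ' m * ∏ j ∈ Finset.range m, (φ ^ ((j : ℝ) + 1 / 2) + φ' ^ ((j : ℝ) + 1 / 2)))

/-- Generalized fibonomial {α choose n} = {α}{α−1}⋯{α−n+1}/{n}!. -/
def genFibonomial (φ φ' α : ℝ) (n : ℕ) : ℝ :=
  (∏ j ∈ Finset.range n, genFibFun φ φ' (α - j)) / fibtorial φ φ' n

/-- Central fibonomial coefficient {2n choose n}. -/
def centralFibonomial (φ φ' : ℝ) (n : ℕ) : ℝ :=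
  fibtorial φ φ' (2 * n) / (fibtorial φ φ' n * fibtorial φ φ' n)

lemma prod_rpow_sum (x : ℝ) (hx : 0 < x) (f : ℕ → ℝ) (n : ℕ) :
    ∏ j ∈ Finset.range n, x ^ (f j) = x ^ (∑ j ∈ Finset.range n, f j) := by
  induction n with
  | zero => simp
  | succ n ih =>
    rw [Finset.prod_range_succ, Finset.sum_range_succ, ih, ← Real.rpow_add hx]

lemma sum_half (n : ℕ) : ∑ j ∈ Finset.range n, -((j : ℝ) + 1 / 2) = -(n : ℝ) ^ 2 / 2 := by
  induction n with
  | zero => simp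
  | succ n ih => rw [Finset.sum_range_succ, ih]; push_cast; ring

lemma fib_pos {φ φ' : ℝ} (h0 : 0 < φ') (hlt : φ' < φ) {α : ℝ} (hα : 0 < α) :
    0 < genFibFun φ φ' α := by
  have h1 : φ' ^ α < φ ^ α := Real.rpow_lt_rpow h0.le hlt hα
  exact div_pos (by linarith) (by linarith)

lemma double_fib {φ φ' : ℝ} (h0 : 0 < φ') (hlt : φ' < φ) (α : ℝ) :
    genFibFun φ φ' (2 * α) = genFibFun φ φ' α * genLucasFun φ φ' α := by
  have hφ0 : 0 < φ := h0.trans hlt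
  unfold genFibFun genLucasFun
  rw [two_mul, Real.rpow_add hφ0, Real.rpow_add h0]
  have : φ - φ' ≠ 0 := by linarith
  field_simp
  ring

lemma neg_fib {t φ φ' : ℝ} (h0 : 0 < φ') (hlt : φ' < φ) (hpt : φ * φ' = -t) (α : ℝ) :
    genFibFun φ φ' (-α) = -((-t) ^ (-α)) * genFibFun φ φ' α := by
  have hφ0 : 0 < φ := h0.trans hlt
  unfold genFibFun
  rw [← hpt, Real.rpow_neg hφ0.le, Real.rpow_neg h0.le,
    Real.rpow_neg (mul_nonneg hφ0.le h0.le), Real.mul_rpow hφ0.le h0.le]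
  have h1 : φ ^ α ≠ 0 := (Real.rpow_pos_of_pos hφ0 α).ne'
  have h2 : φ' ^ α ≠ 0 := (Real.rpow_pos_of_pos h0 α).ne'
  have h3 : φ - φ' ≠ 0 := by linarith
  field_simp
  ring

lemma key {t φ φ' : ℝ} (h0 : 0 < φ') (hlt : φ' < φ) (hpt : φ * φ' = -t) (j : ℕ) :
    genFibFun φ φ' (-(1/2) - (j:ℝ)) =
      (-1) * (-t) ^ (-((j:ℝ) + 1/2)) *
        (genFibFun φ φ' (2*(j:ℝ) + 1) / (φ ^ ((j:ℝ) + 1/2) + φ' ^ ((j:ℝ) + 1/2))) := by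
  have h1 : (-(1/2) - (j:ℝ)) = -((j:ℝ) + 1/2) := by ring
  have h2 : (2*(j:ℝ) + 1) = 2 * ((j:ℝ) + 1/2) := by ring
  rw [h1, h2, neg_fib h0 hlt hpt, double_fib h0 hlt]
  have hD : (0:ℝ) < φ ^ ((j:ℝ) + 1/2) + φ' ^ ((j:ℝ) + 1/2) :=
    add_pos (Real.rpow_pos_of_pos (h0.trans hlt) _) (Real.rpow_pos_of_pos h0 _)
  have hL : φ ^ ((j:ℝ) + 1/2) + φ' ^ ((j:ℝ) + 1/2) = genLucasFun φ φ' ((j:ℝ) + 1/2) := rfl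
  rw [hL, mul_div_assoc, div_self (hL ▸ hD).ne']
  ring

lemma fibtorial_double {φ φ' : ℝ} (h0 : 0 < φ') (hlt : φ' < φ) (n : ℕ) :
    fibtorial φ φ' (2 * n) =
      (∏ j ∈ Finset.range n, genFibFun φ φ' (2*(j:ℝ) + 1)) * fibtorial φ φ' n *
        lucastorial φ φ' n := by
  induction n with
  | zero => simp [fibtorial, lucastorial]
  | succ n ih =>
    have h2 : 2 * (n + 1) = (2 * n + 1) + 1 := by ring
    rw [h2]
    simp only [fibtorial, lucastorial, Finset.prod_range_succ] at ih ⊢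
    rw [ih]
    have hc : ((2 * n + 1 : ℕ) : ℝ) + 1 = 2 * ((n:ℝ) + 1) := by push_cast; ring
    have hc2 : ((2 * n : ℕ) : ℝ) + 1 = 2 * (n:ℝ) + 1 := by push_cast; ring
    rw [hc, hc2, double_fib h0 hlt]
    ring

theorem genFibonomial_neg_half (s t : ℝ) (hs : 0 < s) (ht : t < 0)
    (hdisc : s ^ 2 + 4 * t > 0) (φ φ' : ℝ)
    (hφ : φ = (s + Real.sqrt (s ^ 2 + 4 * t)) / 2)
    (hφ' : φ' = (s - Real.sqrt (s ^ 2 + 4 * t)) / 2)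
    (n : ℕ) :
    genFibonomial φ φ' (-(1 / 2)) n =
      ((-1 : ℝ) ^ n / 4 ^ n) * centralFibonomial φ φ' n * Lfun t φ φ' n := by
  have hsq : Real.sqrt (s ^ 2 + 4 * t) < s := by
    have h := Real.sqrt_lt_sqrt hdisc.le (by nlinarith : s ^ 2 + 4 * t < s ^ 2)
    rwa [Real.sqrt_sq hs.le] at h
  have hsqpos : 0 < Real.sqrt (s ^ 2 + 4 * t) := Real.sqrt_pos.mpr hdisc
  have hφ'0 : 0 < φ' := by rw [hφ']; linarith
  have hlt : φ' < φ := by rw [hφ, hφ']; linarith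
  have hpt : φ * φ' = -t := by
    rw [hφ, hφ']
    have h := Real.sq_sqrt hdisc.le
    nlinarith [h]
  have hφ0 : 0 < φ := hφ'0.trans hlt
  have hmt : (0:ℝ) < -t := by rw [← hpt]; positivity
  have hfibt : ∀ m : ℕ, 0 < fibtorial φ φ' m := fun m =>
    Finset.prod_pos fun j _ => fib_pos hφ'0 hlt (by positivity)
  have hluct : ∀ m : ℕ, 0 < lucastorial φ φ' m := fun m =>
    Finset.prod_pos fun j _ =>
      add_pos (Real.rpow_pos_of_pos hφ0 _) (Real.rpow_pos_of_pos hφ'0 _)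
  have hD : (0:ℝ) < ∏ j ∈ Finset.range n, (φ ^ ((j:ℝ) + 1/2) + φ' ^ ((j:ℝ) + 1/2)) :=
    Finset.prod_pos fun j _ =>
      add_pos (Real.rpow_pos_of_pos hφ0 _) (Real.rpow_pos_of_pos hφ'0 _)
  have hnum : ∏ j ∈ Finset.range n, genFibFun φ φ' (-(1/2) - (j:ℝ)) =
      (-1)^n * (-t) ^ (-(n:ℝ)^2 / 2) *
        ((∏ j ∈ Finset.range n, genFibFun φ φ' (2*(j:ℝ) + 1)) /
          ∏ j ∈ Finset.range n, (φ ^ ((j:ℝ) + 1/2) + φ' ^ ((j:ℝ) + 1/2))) := by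
    rw [Finset.prod_congr rfl fun j _ => key hφ'0 hlt hpt j,
      Finset.prod_mul_distrib, Finset.prod_mul_distrib, Finset.prod_div_distrib,
      Finset.prod_const, Finset.card_range, prod_rpow_sum _ hmt, sum_half]
  unfold genFibonomial centralFibonomial Lfun
  rw [hnum, fibtorial_double hφ'0 hlt n]
  have e1 := (hfibt n).ne'
  have e2 := (hluct n).ne'
  have e3 := hD.ne'
  have e4 : (4:ℝ) ^ n ≠ 0 := by positivity
  field_simp
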